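/- Let 𝒜 be a category with pullbacks and ℳ a class of morphisms in 𝒜. Then ℳ is the right class of an orthogonal factorization system (ℰ, ℳ) on 𝒜 if, and only if, the following three conditions hold: (1) ℳ is closed under composition; (2) ℳ is stable under pullback; (3) for every object B of 𝒜, the full subcategory ℳ/B of the slice category 𝒜/B, spanned by the objects whose underlying morphism lies in ℳ, is reflective in 𝒜/B. -/

import Mathlib

open CategoryTheory CategoryTheory.Limits

universe v u

namespace Burroni

variable {A : Type u} [Category.{v} A]

/-- A morphism `e` is left orthogonal to a morphism `m` if every commutative
square from `e` to `m` admits a unique diagonal fill-in. -/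
def LeftOrthogonal {A₁ A₂ X Y : A} (e : A₁ ⟶ A₂) (m : X ⟶ Y) : Prop :=
  ∀ (u : A₁ ⟶ X) (v : A₂ ⟶ Y), u ≫ m = e ≫ v →
    ∃! w : A₂ ⟶ X, e ≫ w = u ∧ w ≫ m = v

/-- An orthogonal factorization system `(E, M)`: both classes are closed under
composition with isomorphisms, every morphism factors as an `E`-morphism
followed by an `M`-morphism, and every `E`-morphism is left orthogonal to every
`M`-morphism. -/
structure IsOFS (E M : MorphismProperty A) : Prop where
  respectsIso_E : E.RespectsIso
  respectsIso_M : M.RespectsIso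
  factor : ∀ {X Y : A} (f : X ⟶ Y),
    ∃ (Z : A) (e : X ⟶ Z) (m : Z ⟶ Y), E e ∧ M m ∧ e ≫ m = f
  orth : ∀ {A₁ A₂ X Y : A} (e : A₁ ⟶ A₂) (m : X ⟶ Y), E e → M m → LeftOrthogonal e m

end Burroni

open Burroni

namespace BurroniAux

variable {A : Type u} [Category.{v} A]

/-- The left orthogonal complement of a class `M`. -/
def EClass (M : MorphismProperty A) : MorphismProperty A :=
  fun _ _ e => ∀ ⦃X Y : A⦄ (m : X ⟶ Y), M m → LeftOrthogonal e m

/-- If `f` is right orthogonal to every member of `E`, then `f ∈ M`. -/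
theorem mem_M_of_orth {E M : MorphismProperty A} (h : IsOFS E M) {X Y : A} (f : X ⟶ Y)
    (hf : ∀ ⦃A₁ A₂ : A⦄ (e : A₁ ⟶ A₂), E e → LeftOrthogonal e f) : M f := by
  obtain ⟨Z, e, m, he, hm, hem⟩ := h.factor f
  obtain ⟨w, ⟨hw1, hw2⟩, -⟩ := hf e he (𝟙 X) m (by simp [hem])
  obtain ⟨w', ⟨hw'1, hw'2⟩, huniq⟩ := h.orth e m he hm e m rfl
  have h1 : w ≫ e = 𝟙 Z := by
    have ha : w ≫ e = w' := huniq (w ≫ e) ⟨by rw [← Category.assoc, hw1, Category.id_comp],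
      by rw [Category.assoc, hem, hw2]⟩
    have hb : 𝟙 Z = w' := huniq (𝟙 Z) ⟨Category.comp_id e, Category.id_comp m⟩
    rw [ha, hb]
  haveI : IsIso e := ⟨w, hw1, h1⟩
  haveI := h.respectsIso_M
  rw [← hem]
  exact MorphismProperty.RespectsIso.precomp M e m hm

/-- The universal property of the unit of a reflection into a full subcategory. -/
theorem unit_exists_unique {B : A} {P : Over B → Prop} {L : Over B ⥤ ObjectProperty.FullSubcategory P}
    (adj : L ⊣ ObjectProperty.ι P) (Xo : Over B) (n : ObjectProperty.FullSubcategory P)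
    (s : Xo ⟶ (ObjectProperty.ι P).obj n) :
    ∃! t : L.obj Xo ⟶ n, adj.unit.app Xo ≫ (ObjectProperty.ι P).map t = s := by
  refine ⟨(adj.homEquiv Xo n).symm s, ?_, ?_⟩
  · exact (adj.homEquiv Xo n).apply_symm_apply s
  · intro t ht
    exact (Equiv.eq_symm_apply (adj.homEquiv Xo n)).mpr ht

end BurroniAux

open BurroniAux

/-- for a category `A` with pullbacks, a class `M` of morphisms is
the right class of an orthogonal factorization system iff it is closed under
composition, stable under pullback, and `M/B` is reflective in `A/B` for every
object `B`. -/
theorem right_class_of_OFS_iff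
    {A : Type u} [Category.{v} A] [HasPullbacks A] (M : MorphismProperty A) :
    (∃ E : MorphismProperty A, IsOFS E M) ↔
      ((∀ {X Y Z : A} (f : X ⟶ Y) (g : Y ⟶ Z), M f → M g → M (f ≫ g)) ∧
       (∀ {P X Y Z : A} (fst : P ⟶ X) (snd : P ⟶ Y) (f : X ⟶ Z) (g : Y ⟶ Z),
          IsPullback fst snd f g → M g → M fst) ∧
       (∀ B : A,
          (ObjectProperty.ι (fun f : Over B => M f.hom)).IsRightAdjoint)) := by
  constructor
  · rintro ⟨E, h⟩
    refine ⟨?_, ?_, ?_⟩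
    · -- closed under composition
      intro X Y Z f g hf hg
      obtain ⟨W, e, k, he, hk, hek⟩ := h.factor (f ≫ g)
      obtain ⟨w, ⟨hw1, hw2⟩, -⟩ := h.orth e g he hg f k hek.symm
      obtain ⟨t, ⟨ht1, ht2⟩, -⟩ := h.orth e f he hf (𝟙 X) w (by rw [Category.id_comp, hw1])
      obtain ⟨w', _, huniq⟩ := h.orth e k he hk e k rfl
      have h1 : t ≫ e = 𝟙 W := by
        have ha : t ≫ e = w' := huniq (t ≫ e) ⟨by rw [← Category.assoc, ht1, Category.id_comp],
          by rw [Category.assoc, hek, ← hw2, ← Category.assoc, ht2]⟩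
        have hb : 𝟙 W = w' := huniq (𝟙 W) ⟨Category.comp_id e, Category.id_comp k⟩
        rw [ha, hb]
      haveI : IsIso e := ⟨t, ht1, h1⟩
      haveI := h.respectsIso_M
      rw [← hek]
      exact MorphismProperty.RespectsIso.precomp M e k hk
    · -- pullback stability
      intro P X Y Z fst snd f g hpb hg
      apply mem_M_of_orth h
      intro A₁ A₂ e' he' u v hsq
      obtain ⟨hh, ⟨hh1, hh2⟩, hhuniq⟩ := h.orth e' g he' hg (u ≫ snd) (v ≫ f)
        (by rw [Category.assoc, ← hpb.w, ← Category.assoc, hsq, Category.assoc])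
      have hcomm : v ≫ f = hh ≫ g := hh2.symm
      refine ⟨hpb.lift v hh hcomm, ⟨?_, hpb.lift_fst v hh hcomm⟩, ?_⟩
      · apply hpb.hom_ext
        · rw [Category.assoc, hpb.lift_fst, hsq]
        · rw [Category.assoc, hpb.lift_snd, hh1]
      · rintro w' ⟨hw'1, hw'2⟩
        have hs : w' ≫ snd = hh := hhuniq (w' ≫ snd)
          ⟨by rw [← Category.assoc, hw'1], by rw [Category.assoc, ← hpb.w, ← Category.assoc, hw'2]⟩
        apply hpb.hom_ext
        · rw [hw'2, hpb.lift_fst]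
        · rw [hs, hpb.lift_snd]
    · -- reflectivity
      intro B
      choose Z e m he hm hem using fun (Xo : Over B) => h.factor Xo.hom
      let P : Over B → Prop := fun g : Over B => M g.hom
      let F_obj : Over B → ObjectProperty.FullSubcategory P := fun Xo => ⟨Over.mk (m Xo), hm Xo⟩
      have spec : ∀ (Xo : Over B) (n : ObjectProperty.FullSubcategory P)
          (s : Xo ⟶ (ObjectProperty.ι P).obj n),
          ∃! w : Z Xo ⟶ n.obj.left, e Xo ≫ w = s.left ∧ w ≫ n.obj.hom = m Xo := fun Xo n s =>
        h.orth (e Xo) n.obj.hom (he Xo) n.property s.left (m Xo)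
          ((Over.w s).trans (hem Xo).symm)
      have hwc : ∀ (Xo : Over B) (n : ObjectProperty.FullSubcategory P) (t : F_obj Xo ⟶ n),
          (e Xo ≫ t.hom.left) ≫ ((ObjectProperty.ι P).obj n).hom = Xo.hom := by
        intro Xo n t
        rw [Category.assoc]
        show e Xo ≫ t.hom.left ≫ n.obj.hom = Xo.hom
        rw [Over.w t.hom]
        exact hem Xo
      let eqv : ∀ (Xo : Over B) (n : ObjectProperty.FullSubcategory P),
          (F_obj Xo ⟶ n) ≃ (Xo ⟶ (ObjectProperty.ι P).obj n) := fun Xo n =>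
        { toFun := fun t => Over.homMk (e Xo ≫ t.hom.left) (hwc Xo n t)
          invFun := fun s => ObjectProperty.homMk
            (Over.homMk (spec Xo n s).choose (spec Xo n s).choose_spec.1.2)
          left_inv := fun t => by
            apply ObjectProperty.hom_ext
            apply CategoryTheory.Over.OverMorphism.ext
            have h2 := (spec Xo n (Over.homMk (e Xo ≫ t.hom.left) (hwc Xo n t))).choose_spec.2 t.hom.left
              ⟨by simp, by exact Over.w t.hom⟩
            simp only [Over.homMk_left, ObjectProperty.homMk_hom]
            exact h2.symm
          right_inv := fun s => by
            apply CategoryTheory.Over.OverMorphism.ext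
            simp only [Over.homMk_left, ObjectProperty.homMk_hom]
            exact (spec Xo n s).choose_spec.1.1 }
      have hnat : ∀ (Xo : Over B) (n n' : ObjectProperty.FullSubcategory P) (g : n ⟶ n') (t : F_obj Xo ⟶ n),
          eqv Xo n' (t ≫ g) = eqv Xo n t ≫ (ObjectProperty.ι P).map g := by
        intro Xo n n' g t
        apply CategoryTheory.Over.OverMorphism.ext
        show e Xo ≫ t.hom.left ≫ g.hom.left = (e Xo ≫ t.hom.left) ≫ g.hom.left
        rw [Category.assoc]
      exact ⟨_, ⟨Adjunction.adjunctionOfEquivLeft eqv hnat⟩⟩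
  · rintro ⟨hcomp, hpb, hrefl⟩
    have B1 : ∀ {X Y Z : A} (φ : X ⟶ Y) [IsIso φ] (m : Y ⟶ Z), M m → M (φ ≫ m) := by
      intro X Y Z φ _ m hm
      exact hpb (φ ≫ m) φ (𝟙 Z) m (IsPullback.of_vert_isIso ⟨by simp⟩) hm
    have B2 : ∀ B : A, M (𝟙 B) := by
      intro B
      obtain ⟨L, ⟨adj⟩⟩ := (hrefl B).exists_leftAdjoint
      set Xo := Over.mk (𝟙 B) with hXo
      set R := L.obj Xo with hR
      have hem : (adj.unit.app Xo).left ≫ R.obj.hom = 𝟙 B := Over.w (adj.unit.app Xo)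
      let σ : (ObjectProperty.ι (fun f : Over B => M f.hom)).obj R ⟶ Xo :=
        Over.homMk R.obj.hom (Category.comp_id _)
      obtain ⟨t₀, ht₀, hut₀⟩ := unit_exists_unique adj Xo R (adj.unit.app Xo)
      have hid : (𝟙 R : R ⟶ R) = t₀ := hut₀ (𝟙 R) (by exact Category.comp_id _)
      have hσ : adj.unit.app Xo ≫ σ = 𝟙 Xo := by
        apply CategoryTheory.Over.OverMorphism.ext
        exact hem
      have hcand : (ObjectProperty.homMk (σ ≫ adj.unit.app Xo : R.obj ⟶ R.obj) : R ⟶ R) = t₀ := by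
        apply hut₀
        show adj.unit.app Xo ≫ (σ ≫ adj.unit.app Xo) = adj.unit.app Xo
        rw [← Category.assoc, hσ]
        exact Category.id_comp _
      have hretr : R.obj.hom ≫ (adj.unit.app Xo).left = 𝟙 R.obj.left := by
        have h2 : (σ ≫ adj.unit.app Xo : R.obj ⟶ R.obj) = 𝟙 R.obj := by
          have := congrArg InducedCategory.Hom.hom (hcand.trans hid.symm)
          exact this
        have h3 := congrArg CommaMorphism.left h2
        simpa [σ] using h3
      haveI : IsIso (adj.unit.app Xo).left := ⟨R.obj.hom, ⟨hem, hretr⟩⟩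
      have h4 := B1 (adj.unit.app Xo).left R.obj.hom R.property
      rwa [hem] at h4
    have B3 : ∀ {X Y : A} (φ : X ⟶ Y), IsIso φ → M φ := by
      intro X Y φ hφ
      have h4 := @B1 X Y Y φ hφ (𝟙 Y) (B2 Y)
      rwa [Category.comp_id] at h4
    refine ⟨EClass M, ?_, ?_, ?_, ?_⟩
    · -- E respects iso
      apply MorphismProperty.RespectsIso.mk
      · intro X Y Z φ f hf W Y' m hm u v hsq
        obtain ⟨w, ⟨hw1, hw2⟩, huniq⟩ := hf m hm (φ.inv ≫ u) v
          (by rw [Category.assoc, hsq, ← Category.assoc, ← Category.assoc, Iso.inv_hom_id,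
            Category.id_comp])
        refine ⟨w, ⟨?_, hw2⟩, ?_⟩
        · rw [Category.assoc, hw1, ← Category.assoc, Iso.hom_inv_id, Category.id_comp]
        · rintro w' ⟨hw'1, hw'2⟩
          exact huniq w' ⟨by rw [← hw'1, ← Category.assoc, ← Category.assoc, Iso.inv_hom_id,
            Category.id_comp], hw'2⟩
      · intro X Y Z φ f hf W Y' m hm u v hsq
        obtain ⟨w, ⟨hw1, hw2⟩, huniq⟩ := hf m hm u (φ.hom ≫ v)
          (by rw [hsq, Category.assoc])
        refine ⟨φ.inv ≫ w, ⟨?_, ?_⟩, ?_⟩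
        · rw [← Category.assoc, Category.assoc f, Iso.hom_inv_id, Category.comp_id, hw1]
        · rw [Category.assoc, hw2, ← Category.assoc, Iso.inv_hom_id, Category.id_comp]
        · rintro w' ⟨hw'1, hw'2⟩
          have h5 : φ.hom ≫ w' = w := huniq (φ.hom ≫ w')
            ⟨by rw [← hw'1, Category.assoc], by rw [Category.assoc, hw'2]⟩
          rw [← h5, ← Category.assoc, Iso.inv_hom_id, Category.id_comp]
    · -- M respects iso
      apply MorphismProperty.RespectsIso.mk
      · intro X Y Z φ f hf
        exact B1 φ.hom f hf
      · intro X Y Z φ f hf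
        exact hcomp f φ.hom hf (B3 φ.hom inferInstance)
    · -- factorization
      intro X Y f
      obtain ⟨L, ⟨adj⟩⟩ := (hrefl Y).exists_leftAdjoint
      set Xo := Over.mk f with hXo
      set R := L.obj Xo with hR
      have hem : (adj.unit.app Xo).left ≫ R.obj.hom = f := Over.w (adj.unit.app Xo)
      refine ⟨R.obj.left, (adj.unit.app Xo).left, R.obj.hom, ?_, R.property, hem⟩
      -- the unit is in EClass M
      intro W Y' m' hm' u v hsq
      have hMsnd : M (pullback.snd m' v) :=
        hpb (pullback.snd m' v) (pullback.fst m' v) v m'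
          (IsPullback.of_hasPullback m' v).flip hm'
      let n : ObjectProperty.FullSubcategory (fun g : Over Y => M g.hom) :=
        ⟨Over.mk (pullback.snd m' v ≫ R.obj.hom), hcomp _ _ hMsnd R.property⟩
      have hlift : pullback.lift u (adj.unit.app Xo).left hsq ≫
          (pullback.snd m' v ≫ R.obj.hom) = Xo.hom := by
        rw [← Category.assoc, pullback.lift_snd]; exact hem
      let s : Xo ⟶ (ObjectProperty.ι (fun g : Over Y => M g.hom)).obj n :=
        Over.homMk (pullback.lift u (adj.unit.app Xo).left hsq) hlift
      obtain ⟨t, ht, hut⟩ := unit_exists_unique adj Xo n s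
      have hleft : (adj.unit.app Xo).left ≫ t.hom.left = pullback.lift u (adj.unit.app Xo).left hsq := by
        have h2 := congrArg CommaMorphism.left ht
        simpa [s, ObjectProperty.ι_map] using h2
      have htw : t.hom.left ≫ (pullback.snd m' v ≫ R.obj.hom) = R.obj.hom := Over.w t.hom
      obtain ⟨t₀, ht₀, hut₀⟩ := unit_exists_unique adj Xo R (adj.unit.app Xo)
      have hid : (𝟙 R : R ⟶ R) = t₀ := hut₀ (𝟙 R) (by exact Category.comp_id _)
      have hcand : (ObjectProperty.homMk (Over.homMk (t.hom.left ≫ pullback.snd m' v)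
          (by rw [Category.assoc]; exact htw) : R.obj ⟶ R.obj) : R ⟶ R) = t₀ := by
        apply hut₀
        apply CategoryTheory.Over.OverMorphism.ext
        show (adj.unit.app Xo).left ≫ t.hom.left ≫ pullback.snd m' v = (adj.unit.app Xo).left
        rw [← Category.assoc, hleft, pullback.lift_snd]
      have hretr : t.hom.left ≫ pullback.snd m' v = 𝟙 R.obj.left := by
        have h2 : (Over.homMk (t.hom.left ≫ pullback.snd m' v)
            (by rw [Category.assoc]; exact htw) : R.obj ⟶ R.obj) = 𝟙 R.obj := by
          have h3 := congrArg InducedCategory.Hom.hom (hcand.trans hid.symm)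
          exact h3
        have h3 := congrArg CommaMorphism.left h2
        simpa using h3
      refine ⟨t.hom.left ≫ pullback.fst m' v, ⟨?_, ?_⟩, ?_⟩
      · rw [← Category.assoc, hleft, pullback.lift_fst]
      · rw [Category.assoc, pullback.condition, ← Category.assoc, hretr, Category.id_comp]
      · rintro w₂ ⟨hw₂1, hw₂2⟩
        have hpf : w₂ ≫ m' = 𝟙 R.obj.left ≫ v := by rw [hw₂2, Category.id_comp]
        have hs₂w : pullback.lift w₂ (𝟙 R.obj.left) hpf ≫
            (pullback.snd m' v ≫ R.obj.hom) = R.obj.hom := by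
          rw [← Category.assoc, pullback.lift_snd, Category.id_comp]
        have heq : (ObjectProperty.homMk (Over.homMk (pullback.lift w₂ (𝟙 R.obj.left) hpf) hs₂w :
            R.obj ⟶ n.obj) : R ⟶ n) = t := by
          apply hut
          apply CategoryTheory.Over.OverMorphism.ext
          show (adj.unit.app Xo).left ≫ pullback.lift w₂ (𝟙 R.obj.left) hpf = s.left
          apply pullback.hom_ext
          · rw [Category.assoc, pullback.lift_fst]
            show (adj.unit.app Xo).left ≫ w₂ = s.left ≫ pullback.fst m' v
            rw [hw₂1]
            show u = pullback.lift u (adj.unit.app Xo).left hsq ≫ pullback.fst m' v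
            rw [pullback.lift_fst]
          · rw [Category.assoc, pullback.lift_snd]
            exact (Category.comp_id _).trans
              (pullback.lift_snd u (adj.unit.app Xo).left hsq).symm
        have heq' : (Over.homMk (pullback.lift w₂ (𝟙 R.obj.left) hpf) hs₂w :
            R.obj ⟶ n.obj) = t.hom := congrArg InducedCategory.Hom.hom heq
        have h2 := congrArg CommaMorphism.left heq'
        simp only [Over.homMk_left] at h2
        rw [show t.hom.left = pullback.lift w₂ (𝟙 R.obj.left) hpf from h2.symm, pullback.lift_fst]
    · -- orthogonality
      intro A₁ A₂ X' Y' e' mm he' hmm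
      exact he' mm hmm
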